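/- Let H be a real Hilbert space, T, A : H → H, B : ℝ^q → H and C : H → ℝ^p bounded linear operators, u₀ ∈ ℝ^q, ū₀ ∈ ℝ^p. Suppose x, x̄ : [0,∞) → H are differentiable with T ẋ(t) = A x(t), T* ẋ̄(t) = A* x̄(t) for all t ≥ 0, T x(0) = B u₀, and T* x̄(0) = C* ū₀. Then for every t ≥ 0, ⟨ū₀, C x(t)⟩ = ⟨B* x̄(t), u₀⟩; that is, the primal output z(t) = C x(t) and the dual output z̄(t) = B* x̄(t) satisfy ū₀ᵀ z(t) = z̄(t)ᵀ u₀. -/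

import Mathlib

open scoped RealInnerProductSpace

/-- Output-intertwining identity (core step in the proof of Theorem 2): along a primal
trajectory of `Σ(T,A)` with initial datum `B u₀` and a dual trajectory of `Σ(T*,A*)` with
initial datum `C* ū₀`, the outputs satisfy `ū₀ᵀ z(t) = z̄(t)ᵀ u₀`, i.e.
`⟪ū₀, C x(t)⟫ = ⟪B* x̄(t), u₀⟫` for all `t ≥ 0`. -/
theorem pie_dual_output_intertwining
    {H : Type*} [NormedAddCommGroup H] [InnerProductSpace ℝ H] [CompleteSpace H]
    (q p : ℕ) (T A : H →L[ℝ] H)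
    (B : EuclideanSpace ℝ (Fin q) →L[ℝ] H) (C : H →L[ℝ] EuclideanSpace ℝ (Fin p))
    (u₀ : EuclideanSpace ℝ (Fin q)) (ub₀ : EuclideanSpace ℝ (Fin p))
    (x xb x' xb' : ℝ → H)
    (hx : ∀ t : ℝ, 0 ≤ t → HasDerivAt x (x' t) t)
    (hxb : ∀ t : ℝ, 0 ≤ t → HasDerivAt xb (xb' t) t)
    (hxeq : ∀ t : ℝ, 0 ≤ t → T (x' t) = A (x t))
    (hxbeq : ∀ t : ℝ, 0 ≤ t →
      ContinuousLinearMap.adjoint T (xb' t) = ContinuousLinearMap.adjoint A (xb t))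
    (hx0 : T (x 0) = B u₀)
    (hxb0 : ContinuousLinearMap.adjoint T (xb 0) = ContinuousLinearMap.adjoint C ub₀) :
    ∀ t : ℝ, 0 ≤ t →
      ⟪ub₀, C (x t)⟫ = ⟪ContinuousLinearMap.adjoint B (xb t), u₀⟫ := by
  intro t ht
  -- the function s ↦ ⟪xb (t - s), T (x s)⟫ is constant on [0, t]
  set f : ℝ → ℝ := fun s => ⟪xb (t - s), T (x s)⟫ with hf
  have key : ∀ s ∈ Set.Icc (0:ℝ) t, HasDerivAt f 0 s := by
    intro s hs
    obtain ⟨hs0, hst⟩ := hs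
    have hts : (0:ℝ) ≤ t - s := by linarith
    have hlin : HasDerivAt (fun s : ℝ => t - s) (-1) s := by
      simpa using (hasDerivAt_id s).const_sub t
    have h1 : HasDerivAt (fun s : ℝ => xb (t - s)) (-xb' (t - s)) s := by
      have := (hxb (t - s) hts).scomp s hlin
      rw [neg_one_smul] at this
      exact this
    have h2 : HasDerivAt (fun s : ℝ => T (x s)) (T (x' s)) s :=
      T.hasFDerivAt.comp_hasDerivAt s (hx s hs0)
    have h3 := h1.inner ℝ h2
    have hz : ⟪xb (t - s), T (x' s)⟫ + ⟪-xb' (t - s), T (x s)⟫ = 0 := by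
      have e1 : ⟪xb' (t - s), T (x s)⟫ = ⟪A (x s), xb (t - s)⟫ := by
        rw [← ContinuousLinearMap.adjoint_inner_left, hxbeq (t - s) hts,
          ContinuousLinearMap.adjoint_inner_left, real_inner_comm]
      rw [inner_neg_left, e1, hxeq s hs0, real_inner_comm]
      ring
    rw [hz] at h3
    exact h3
  have hcont : ContinuousOn f (Set.Icc 0 t) := fun s hs =>
    (key s hs).continuousAt.continuousWithinAt
  have hderiv : ∀ s ∈ Set.Ico (0:ℝ) t, HasDerivWithinAt f 0 (Set.Ici s) s := fun s hs =>
    ((key s ⟨hs.1, hs.2.le⟩).hasDerivWithinAt)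
  have hconst := constant_of_has_deriv_right_zero hcont hderiv t ⟨ht, le_rfl⟩
  -- f t = f 0 gives ⟪xb 0, T (x t)⟫ = ⟪xb t, T (x 0)⟫
  have hft : ⟪xb 0, T (x t)⟫ = ⟪xb t, T (x 0)⟫ := by
    simpa [hf, sub_self] using hconst
  calc ⟪ub₀, C (x t)⟫ = ⟪ContinuousLinearMap.adjoint C ub₀, x t⟫ := by
        rw [ContinuousLinearMap.adjoint_inner_left]
    _ = ⟪ContinuousLinearMap.adjoint T (xb 0), x t⟫ := by rw [hxb0]
    _ = ⟪xb 0, T (x t)⟫ := by rw [ContinuousLinearMap.adjoint_inner_left]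
    _ = ⟪xb t, T (x 0)⟫ := hft
    _ = ⟪xb t, B u₀⟫ := by rw [hx0]
    _ = ⟪ContinuousLinearMap.adjoint B (xb t), u₀⟫ := by
        rw [ContinuousLinearMap.adjoint_inner_left]
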